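/- Let 0 < m < n and let S ⊆ Σ^m ∪ Σ^n be a set of words each of length m or n, over any finite alphabet Σ. If S* is co-finite, then every word of length m belongs to S, i.e., Σ^m ⊆ S. -/

import Mathlib

open Computability

/-- If `0 < m < n`, `S ⊆ Σ^m ∪ Σ^n`, and `S∗` is co-finite, then
`Σ^m ⊆ S`. -/
theorem full_length_m_of_cofinite {α : Type} [Fintype α] (m n : ℕ) (hm : 0 < m) (hmn : m < n)
    (S : Language α) (hS : ∀ w ∈ S, w.length = m ∨ w.length = n)
    (hcof : Set.Finite ((S∗ : Language α)ᶜ)) :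
    ∀ w : List α, w.length = m → w ∈ S := by
  intro w hw
  by_contra hns
  have hwne : w ≠ [] := by
    intro h; rw [h] at hw; simp at hw; omega
  set a : α := w.head hwne with ha
  set u : List α := List.replicate (n - m) a with hu
  have hulen : u.length = n - m := by simp [hu]
  -- key step: any word starting with w that is in S∗ must start with an n-block
  have step : ∀ t : List α, (w ++ t) ∈ (S∗ : Language α) →
      t.drop (n - m) ∈ (S∗ : Language α) := by
    intro t ht
    rw [Language.mem_kstar] at ht
    obtain ⟨L, hjoin, hmem⟩ := ht
    match L with
    | [] =>
      simp only [List.flatten_nil] at hjoin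
      exact absurd (List.append_eq_nil_iff.mp hjoin).1 hwne
    | s :: L' =>
      have hjoin' : s ++ L'.flatten = w ++ t := by
        simpa using hjoin.symm
      have hsS : s ∈ S := hmem s (by simp)
      rcases hS s hsS with hlen | hlen
      · -- s has length m, so s = w ∈ S, contradiction
        have : s = w := (List.append_inj hjoin' (by rw [hlen, hw])).1
        exact absurd (this ▸ hsS) hns
      · -- s has length n, so the rest is t.drop (n-m)
        have hrest : L'.flatten ∈ (S∗ : Language α) :=
          Language.join_mem_kstar (fun y hy => hmem y (by simp [hy]))
        have h1 : (w ++ t).drop n = L'.flatten := by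
          rw [← hjoin', ← hlen, List.drop_left]
        have hn : (w ++ t).drop n = (w ++ t).drop (w.length + (n - m)) := by
          rw [hw]; congr 1; omega
        rw [hn, List.drop_length_add_append] at h1
        rw [h1]; exact hrest
  -- w itself is not in S∗
  have hw0 : w ∉ (S∗ : Language α) := by
    intro hmem0
    rw [Language.mem_kstar] at hmem0
    obtain ⟨L, hjoin, hmem⟩ := hmem0
    match L with
    | [] =>
      simp only [List.flatten_nil] at hjoin
      exact hwne hjoin
    | s :: L' =>
      have hjoin' : w = s ++ L'.flatten := by simpa using hjoin
      have hsS : s ∈ S := hmem s (by simp)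
      have hlen0 := congrArg List.length hjoin'
      rw [List.length_append, hw] at hlen0
      rcases hS s hsS with hlen | hlen
      · have : L'.flatten = [] := List.length_eq_zero_iff.mp (by omega)
        rw [this, List.append_nil] at hjoin'
        exact hns (hjoin' ▸ hsS)
      · omega
  -- the infinite family g k = w ++ (u ++ (w ++ (u ++ ... ++ w)))
  set g : ℕ → List α := fun k => Nat.rec w (fun _ ih => w ++ (u ++ ih)) k with hg
  have hgz : g 0 = w := rfl
  have hgs : ∀ k, g (k + 1) = w ++ (u ++ g k) := fun k => rfl
  have hgnot : ∀ k, g k ∉ (S∗ : Language α) := by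
    intro k
    induction k with
    | zero => exact hw0
    | succ k ih =>
      intro hmem'
      rw [hgs] at hmem'
      have := step _ hmem'
      rw [← hulen, List.drop_left] at this
      exact ih this
  have hglen : ∀ k, (g k).length = m + k * n := by
    intro k
    induction k with
    | zero => simpa [hgz] using hw
    | succ k ih =>
      rw [hgs, List.length_append, List.length_append, hulen, hw, ih, Nat.succ_mul]
      generalize k * n = p
      omega
  have hginj : Function.Injective g := by
    intro i j hij
    have := congrArg List.length hij
    rw [hglen i, hglen j] at this
    have : i * n = j * n := by omega
    exact Nat.eq_of_mul_eq_mul_right (by omega) this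
  have hinf : Set.Infinite ((S∗ : Language α)ᶜ) :=
    Set.infinite_of_injective_forall_mem hginj (fun k => hgnot k)
  exact hinf hcof
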